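/- Let q ∈ ℝ with q ≥ 2, let y ∈ ℝ, and set γ = 1/(2q−2). Define F : ℝ → ℝ by F(u) = |u − y|^q − γ·q·u·sign(u − y)·|u − y|^{q−1} + (1−γ)·q·u·sign(y)·|y|^{q−1}, where |t|^r denotes the real power of the absolute value and sign(t) ∈ {−1,0,1}. Then (a) F is differentiable on ℝ and u·F′(u) ≥ 0 for every u ∈ ℝ, and (b) F(u) ≥ F(0) = |y|^q for every u ∈ ℝ. -/

import Mathlib

noncomputable section


private lemma rpow_factor {x : ℝ} (hx : 0 ≤ x) {p : ℝ} (hp : 1 ≤ p) :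
    x ^ p = x * x ^ (p - 1) := by
  rcases hx.eq_or_lt with h | h
  · rw [← h, Real.zero_rpow (by linarith), zero_mul]
  · have h2 := Real.rpow_add h 1 (p - 1)
    rw [Real.rpow_one] at h2
    rw [show (1:ℝ) + (p-1) = p by ring] at h2
    exact h2

private lemma sign_mul_abs_rpow_of_nonneg {r : ℝ} (hr : 0 ≤ r) {p : ℝ} (hp : 0 < p) :
    Real.sign r * |r| ^ p = r ^ p := by
  rcases hr.eq_or_lt with h | h
  · rw [← h]; simp [Real.sign_zero, Real.zero_rpow hp.ne']
  · rw [Real.sign_of_pos h, abs_of_pos h, one_mul]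

private lemma young_step {p b s : ℝ} (hp : 1 ≤ p) (hb : 0 ≤ b) (hs : 0 ≤ s) :
    p * (b * s ^ (p - 1)) ≤ b ^ p + (p - 1) * s ^ p := by
  have hp0 : 0 < p := by linarith
  have h := Real.geom_mean_le_arith_mean2_weighted (w₁ := 1/p) (w₂ := (p-1)/p)
      (p₁ := b ^ p) (p₂ := s ^ p) (by positivity)
      (div_nonneg (by linarith) hp0.le)
      (Real.rpow_nonneg hb p) (Real.rpow_nonneg hs p)
      (by field_simp; ring)
  have e1 : (b ^ p) ^ (1/p : ℝ) = b := by
    rw [← Real.rpow_mul hb, mul_one_div, div_self hp0.ne', Real.rpow_one]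
  have e2 : (s ^ p) ^ ((p-1)/p : ℝ) = s ^ (p-1) := by
    rw [← Real.rpow_mul hs]; congr 1; field_simp
  rw [e1, e2, show 1/p * b^p + (p-1)/p * s^p = (b^p + (p-1) * s^p)/p by ring,
    le_div_iff₀ hp0] at h
  linarith [h]

private lemma core_aux {p : ℝ} (hp : 1 ≤ p) {s : ℝ} (hs : 0 ≤ s) (r : ℝ) :
    p * (s - r)^2 * s ^ (p-1) ≤ (2*p - 1) * ((s - r) * (s ^ p - Real.sign r * |r| ^ p)) := by
  have hp0 : 0 < p := by linarith
  have hsp1 : (0:ℝ) ≤ s ^ (p-1) := Real.rpow_nonneg hs _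
  have hsf : s ^ p = s * s ^ (p-1) := rpow_factor hs hp
  rcases lt_or_ge r 0 with hr | hr
  · -- r < 0
    rw [Real.sign_of_neg hr, abs_of_neg hr]
    set b := -r with hbdef
    have hb : 0 < b := by simp [hbdef]; linarith
    have hbp : (0:ℝ) ≤ b ^ p := Real.rpow_nonneg hb.le _
    have hyoung := young_step hp hb.le hs
    have key : p * ((s + b) * s ^ (p-1)) ≤ (2*p - 1) * (s ^ p + b ^ p) := by
      nlinarith [Real.rpow_nonneg hs p]
    have hsb : (0:ℝ) ≤ s + b := by linarith
    have := mul_le_mul_of_nonneg_left key hsb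
    have hsr : s - r = s + b := by rw [hbdef]; ring
    rw [hsr]
    nlinarith [this]
  · -- 0 ≤ r
    rw [sign_mul_abs_rpow_of_nonneg hr hp0]
    have hrp1 : (0:ℝ) ≤ r ^ (p-1) := Real.rpow_nonneg hr _
    have hrf : r ^ p = r * r ^ (p-1) := rpow_factor hr hp
    rcases le_total r s with hrs | hrs
    · -- 0 ≤ r ≤ s
      have hmono : r ^ (p-1) ≤ s ^ (p-1) := Real.rpow_le_rpow hr hrs (by linarith)
      have h1 : r ^ p ≤ r * s ^ (p-1) := by
        rw [hrf]; exact mul_le_mul_of_nonneg_left hmono hr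
      have key : p * ((s - r) * s ^ (p-1)) ≤ (2*p - 1) * (s ^ p - r ^ p) := by
        nlinarith [mul_nonneg (mul_nonneg (by linarith : (0:ℝ) ≤ p - 1) (by linarith : (0:ℝ) ≤ s - r)) hsp1]
      have := mul_le_mul_of_nonneg_left key (by linarith : (0:ℝ) ≤ s - r)
      nlinarith [this]
    · -- 0 ≤ s ≤ r
      have hmono : s ^ (p-1) ≤ r ^ (p-1) := Real.rpow_le_rpow hs hrs (by linarith)
      have h1 : r * s ^ (p-1) ≤ r ^ p := by
        rw [hrf]; exact mul_le_mul_of_nonneg_left hmono hr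
      have key : p * ((r - s) * s ^ (p-1)) ≤ (2*p - 1) * (r ^ p - s ^ p) := by
        nlinarith [mul_nonneg (mul_nonneg (by linarith : (0:ℝ) ≤ p - 1) (by linarith : (0:ℝ) ≤ r - s)) hsp1]
      have := mul_le_mul_of_nonneg_left key (by linarith : (0:ℝ) ≤ r - s)
      nlinarith [this]

private lemma core {p : ℝ} (hp : 1 ≤ p) (s r : ℝ) :
    p * (s - r)^2 * |s| ^ (p-1)
      ≤ (2*p - 1) * ((s - r) * (Real.sign s * |s| ^ p - Real.sign r * |r| ^ p)) := by
  have hp0 : 0 < p := by linarith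
  rcases le_total 0 s with hs | hs
  · rw [sign_mul_abs_rpow_of_nonneg hs hp0, abs_of_nonneg hs]
    exact core_aux hp hs r
  · have h := core_aux hp (s := -s) (by linarith) (-r)
    have e1 : Real.sign s * |s| ^ p = -((-s) ^ p) := by
      have := sign_mul_abs_rpow_of_nonneg (r := -s) (by linarith) hp0
      rw [Real.sign_neg, abs_neg] at this
      linarith [this]
    have e2 : Real.sign (-r) * |(-r)| ^ p = -(Real.sign r * |r| ^ p) := by
      rw [Real.sign_neg, abs_neg]; ring
    rw [e2] at h
    rw [e1, abs_of_nonpos hs]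
    nlinarith [h]


private lemma hasDerivAt_zero_of_bound {p : ℝ} (hp : 1 < p) {f : ℝ → ℝ} (hf0 : f 0 = 0)
    (hb : ∀ x, |f x| ≤ |x| ^ p) : HasDerivAt f 0 0 := by
  rw [hasDerivAt_iff_isLittleO]
  simp only [hf0, sub_zero, smul_zero]
  rw [Asymptotics.isLittleO_iff]
  intro c hc
  have h1 : ContinuousAt (fun y : ℝ => y ^ (p-1)) 0 :=
    Real.continuousAt_rpow_const 0 (p-1) (Or.inr (by linarith))
  have ht : Filter.Tendsto (fun x : ℝ => |x| ^ (p-1)) (nhds 0) (nhds 0) := by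
    have h2 := h1.tendsto
    rw [Real.zero_rpow (by linarith : p - 1 ≠ 0)] at h2
    exact h2.comp (continuous_abs.tendsto' 0 0 abs_zero)
  filter_upwards [ht.eventually (eventually_le_nhds hc)] with x hx
  rcases eq_or_ne x 0 with h | h
  · simp [h, hf0]
  · have hxp : |x| ^ p = |x| ^ (p-1) * |x| := by
      rw [rpow_factor (abs_nonneg x) hp.le]; ring
    have h3 : |x| ^ (p-1) * |x| ≤ c * |x| :=
      mul_le_mul_of_nonneg_right hx (abs_nonneg x)
    calc ‖f x‖ = |f x| := Real.norm_eq_abs _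
      _ ≤ |x| ^ p := hb x
      _ = |x| ^ (p-1) * |x| := hxp
      _ ≤ c * |x| := h3
      _ = c * ‖x‖ := by rw [Real.norm_eq_abs]

private lemma my_hasDerivAt_abs_rpow {p : ℝ} (hp : 1 < p) (t : ℝ) :
    HasDerivAt (fun x : ℝ => |x| ^ p) (p * Real.sign t * |t| ^ (p - 1)) t := by
  rcases lt_trichotomy t 0 with ht | ht | ht
  · have h0 : HasDerivAt (fun x : ℝ => (-x) ^ p) (p * (-t) ^ (p-1) * (-1)) t :=
      (Real.hasDerivAt_rpow_const (x := -t) (p := p) (Or.inl (by linarith))).comp t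
        (hasDerivAt_neg t)
    have he : (fun x : ℝ => |x| ^ p) =ᶠ[nhds t] fun x => (-x) ^ p := by
      filter_upwards [Iio_mem_nhds ht] with x hx
      rw [abs_of_neg hx]
    have h2 := h0.congr_of_eventuallyEq he
    refine h2.congr_deriv ?_
    rw [Real.sign_of_neg ht, abs_of_neg ht]; ring
  · subst ht
    have h2 := hasDerivAt_zero_of_bound hp (f := fun x : ℝ => |x| ^ p)
      (by simp [Real.zero_rpow (by linarith : p ≠ 0)])
      (fun x => le_of_eq (abs_of_nonneg (Real.rpow_nonneg (abs_nonneg x) p)))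
    convert h2 using 1
    simp [Real.sign_zero]
  · have h0 : HasDerivAt (fun x : ℝ => x ^ p) (p * t ^ (p-1)) t :=
      Real.hasDerivAt_rpow_const (Or.inl ht.ne')
    have he : (fun x : ℝ => |x| ^ p) =ᶠ[nhds t] fun x => x ^ p := by
      filter_upwards [Ioi_mem_nhds ht] with x hx
      rw [abs_of_pos hx]
    have h2 := h0.congr_of_eventuallyEq he
    refine h2.congr_deriv ?_
    rw [Real.sign_of_pos ht, abs_of_pos ht]; ring

private lemma abs_sign_le_one (x : ℝ) : |Real.sign x| ≤ 1 := by
  rcases Real.sign_apply_eq x with h | h | h <;> rw [h] <;> norm_num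

private lemma hasDerivAt_sign_rpow {p : ℝ} (hp : 1 ≤ p) (t : ℝ) :
    HasDerivAt (fun x : ℝ => Real.sign x * |x| ^ p) (p * |t| ^ (p - 1)) t := by
  rcases hp.eq_or_lt with hp1 | hp1
  · have hfe : (fun x : ℝ => Real.sign x * |x| ^ p) = fun x => x := by
      funext x
      rw [← hp1, Real.rpow_one]
      rcases lt_trichotomy x 0 with h | h | h
      · rw [Real.sign_of_neg h, abs_of_neg h]; ring
      · simp [h, Real.sign_zero]
      · rw [Real.sign_of_pos h, abs_of_pos h]; ring
    rw [hfe, ← hp1]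
    exact (hasDerivAt_id' t).congr_deriv (by simp)
  · rcases lt_trichotomy t 0 with ht | ht | ht
    · have h0 : HasDerivAt (fun x : ℝ => -((-x) ^ p)) (-(p * (-t) ^ (p-1) * (-1))) t :=
        ((Real.hasDerivAt_rpow_const (x := -t) (p := p) (Or.inl (by linarith))).comp t
          (hasDerivAt_neg t)).neg
      have he : (fun x : ℝ => Real.sign x * |x| ^ p) =ᶠ[nhds t] fun x => -((-x) ^ p) := by
        filter_upwards [Iio_mem_nhds ht] with x hx
        rw [Real.sign_of_neg hx, abs_of_neg hx]; ring
      have h2 := h0.congr_of_eventuallyEq he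
      refine h2.congr_deriv ?_
      rw [abs_of_neg ht]; ring
    · subst ht
      have h2 := hasDerivAt_zero_of_bound hp1 (f := fun x : ℝ => Real.sign x * |x| ^ p)
        (by simp [Real.sign_zero])
        (fun x => by
          rw [abs_mul, abs_of_nonneg (Real.rpow_nonneg (abs_nonneg x) p)]
          calc |Real.sign x| * |x| ^ p ≤ 1 * |x| ^ p :=
                mul_le_mul_of_nonneg_right (abs_sign_le_one x)
                  (Real.rpow_nonneg (abs_nonneg x) p)
            _ = |x| ^ p := one_mul _)
      convert h2 using 1
      simp [Real.zero_rpow (by linarith : p - 1 ≠ 0)]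
    · have h0 : HasDerivAt (fun x : ℝ => x ^ p) (p * t ^ (p-1)) t :=
        Real.hasDerivAt_rpow_const (Or.inl ht.ne')
      have he : (fun x : ℝ => Real.sign x * |x| ^ p) =ᶠ[nhds t] fun x => x ^ p := by
        filter_upwards [Ioi_mem_nhds ht] with x hx
        rw [Real.sign_of_pos hx, abs_of_pos hx]; ring
      have h2 := h0.congr_of_eventuallyEq he
      refine h2.congr_deriv ?_
      rw [abs_of_pos ht]

theorem stmt4 (q : ℝ) (hq : 2 ≤ q) (y : ℝ) (γ : ℝ) (hγ : γ = 1 / (2 * q - 2))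
    (F : ℝ → ℝ)
    (hF : F = fun u : ℝ =>
      |u - y| ^ q - γ * (q * u * Real.sign (u - y) * |u - y| ^ (q - 1))
        + (1 - γ) * (q * u * Real.sign y * |y| ^ (q - 1))) :
    (Differentiable ℝ F ∧ ∀ u : ℝ, 0 ≤ u * deriv F u) ∧
      ((∀ u : ℝ, F 0 ≤ F u) ∧ F 0 = |y| ^ q) := by
  have hq1 : (1:ℝ) < q := by linarith
  have hq11 : (1:ℝ) ≤ q - 1 := by linarith
  have h2q2 : (0:ℝ) < 2*q - 2 := by linarith
  have hne : (2*q - 2) ≠ 0 := ne_of_gt h2q2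
  have hF2 : F = fun u : ℝ => |u - y| ^ q
      - (γ * q) * (u * (Real.sign (u - y) * |u - y| ^ (q-1)))
      + ((1 - γ) * (q * Real.sign y * |y| ^ (q-1))) * u := by
    rw [hF]; funext u; ring
  have hD : ∀ u : ℝ, HasDerivAt F
      ((q * Real.sign (u-y) * |u-y| ^ (q-1)) * 1
        - (γ * q) * (1 * (Real.sign (u-y) * |u-y| ^ (q-1))
            + u * ((q-1) * |u-y| ^ (q-1-1) * 1))
        + ((1 - γ) * (q * Real.sign y * |y| ^ (q-1))) * 1) u := by
    intro u
    rw [hF2]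
    exact (((my_hasDerivAt_abs_rpow hq1 (u-y)).comp u ((hasDerivAt_id u).sub_const y)).sub
        (((hasDerivAt_id u).mul
          ((hasDerivAt_sign_rpow hq11 (u-y)).comp u ((hasDerivAt_id u).sub_const y))).const_mul
          (γ * q))).add
      (HasDerivAt.const_mul ((1 - γ) * (q * Real.sign y * |y| ^ (q-1))) (hasDerivAt_id u))
  have hdiff : Differentiable ℝ F := fun u => (hD u).differentiableAt
  have hderiv : ∀ u : ℝ, deriv F u =
      (q * (2*q - 3) * (Real.sign (u-y) * |u-y| ^ (q-1) + Real.sign y * |y| ^ (q-1))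
        - q * (q-1) * u * |u-y| ^ (q-1-1)) / (2*q - 2) := by
    intro u
    rw [(hD u).deriv, hγ]
    field_simp
    ring
  have ha : ∀ u : ℝ, 0 ≤ u * deriv F u := by
    intro u
    have hc := core hq11 (u - y) (-y)
    rw [Real.sign_neg, abs_neg] at hc
    have hc' := mul_le_mul_of_nonneg_left hc (by linarith : (0:ℝ) ≤ q)
    rw [hderiv u, ← mul_div_assoc]
    apply div_nonneg _ (by linarith)
    nlinarith [hc']
  refine ⟨⟨hdiff, ha⟩, ⟨?_, ?_⟩⟩
  · intro u
    rcases le_total 0 u with hu | hu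
    · rcases hu.eq_or_lt with h | h
      · rw [← h]
      · have hm := monotoneOn_of_deriv_nonneg (convex_Icc 0 u)
          hdiff.continuous.continuousOn
          (fun x _ => (hD x).differentiableAt.differentiableWithinAt)
          (fun x hx => by
            rw [interior_Icc] at hx
            nlinarith [ha x, hx.1])
        exact hm (Set.left_mem_Icc.mpr hu) (Set.right_mem_Icc.mpr hu) hu
    · rcases hu.lt_or_eq with h | h
      case inr => rw [h]
      · have hm := antitoneOn_of_deriv_nonpos (convex_Icc u 0)
          hdiff.continuous.continuousOn
          (fun x _ => (hD x).differentiableAt.differentiableWithinAt)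
          (fun x hx => by
            rw [interior_Icc] at hx
            nlinarith [ha x, hx.2])
        exact hm (Set.left_mem_Icc.mpr hu) (Set.right_mem_Icc.mpr hu) hu
  · rw [hF]
    simp [zero_sub, abs_neg]
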